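/- Let S(u) = ℓ(u)·u^{-α} where ℓ is slowly varying and α ∈ (1,2), such that u^p S^{(p)}(u)/S(u) → Γ(1-α)/Γ(1-α-p) as u → ∞ for all p ≥ 0. Write ẑ = 1/(1-z) for z ∈ (0,1). Then for every p ≥ 1 there is a constant C_{α,p} such that the p-th derivative with respect to z of the function z ↦ S(1/(1-z)) is asymptotically equivalent, as z → 1⁻, to C_{α,p}·ẑ^{p+1}·S'(ẑ), which in turn is asymptotically equivalent to -α·C_{α,p}·ẑ^p·S(ẑ). -/

import Mathlib

open Filter Set Asymptotics

/-- A positive function on `(0,∞)` is slowly varying if `ℓ(ax)/ℓ(x) → 1` as `x → ∞` for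
every `a > 0`. -/
def SlowlyVarying (ℓ : ℝ → ℝ) : Prop :=
  (∀ x > 0, 0 < ℓ x) ∧ ∀ a > 0, Tendsto (fun x => ℓ (a * x) / ℓ x) atTop (nhds 1)

private lemma sum_shift' (j : ℕ) (a D : ℕ → ℝ) (ha0 : a 0 = 0)
    (hatop : ∀ k, j < k → a k = 0) :
    ∑ k ∈ Finset.Icc 1 (j+1), (((j:ℝ)+k) * a k + a (k-1)) * D k
      = ∑ k ∈ Finset.Icc 1 j, a k * (D (k+1) + ((j:ℝ)+k) * D k) := by
  rw [← Finset.Ico_add_one_right_eq_Icc, ← Finset.Ico_add_one_right_eq_Icc, Finset.sum_Ico_eq_sum_range,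
    Finset.sum_Ico_eq_sum_range]
  simp only [Nat.add_sub_cancel, Nat.succ_sub_one]
  have h1 : ∀ i : ℕ, (1:ℕ) + i - 1 = i := by omega
  simp only [h1]
  have expand : ∀ x ∈ Finset.range (j+1),
      (((j:ℝ)+(1+x:ℕ)) * a (1+x) + a x) * D (1+x)
        = ((j:ℝ)+(1+x:ℕ)) * a (1+x) * D (1+x) + a x * D (1+x) := by
    intros; ring
  rw [Finset.sum_congr rfl expand, Finset.sum_add_distrib,
    Finset.sum_range_succ (fun x => ((j:ℝ)+(1+x:ℕ)) * a (1+x) * D (1+x)),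
    hatop (1+j) (by omega),
    Finset.sum_range_succ' (fun i => a i * D (1+i)), ha0]
  simp only [mul_zero, zero_mul, add_zero, zero_add]
  rw [← Finset.sum_add_distrib]
  apply Finset.sum_congr rfl
  intro i _
  rw [show 1+(i+1) = 1+i+1 by omega]
  ring

/-- Let `S(u) = ℓ(u) u^{-α}` with `ℓ` slowly varying and `α ∈ (1,2)`, such that
`u^p S^{(p)}(u)/S(u) → Γ(1-α)/Γ(1-α-p)` as `u → ∞` for all `p ≥ 0`. Writing
`ẑ = 1/(1-z)`, for every `p ≥ 1` there is a constant `C_{α,p}` such that, as `z → 1⁻`,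
the `p`-th derivative of `z ↦ S(1/(1-z))` is `∼ C_{α,p} ẑ^{p+1} S'(ẑ)`, which is itself
`∼ -α C_{α,p} ẑ^p S(ẑ)`. -/
theorem stmt_11 (α : ℝ) (hα1 : 1 < α) (hα2 : α < 2) (ℓ : ℝ → ℝ) (hℓ : SlowlyVarying ℓ)
    (S : ℝ → ℝ) (hS : ∀ u : ℝ, 0 < u → S u = ℓ u * u ^ (-α))
    (hratio : ∀ p : ℕ,
      Tendsto (fun u => u ^ (p : ℕ) * iteratedDeriv p S u / S u) atTop
        (nhds (Real.Gamma (1 - α) / Real.Gamma (1 - α - p)))) :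
    ∀ p : ℕ, 1 ≤ p → ∃ C : ℝ,
      (IsEquivalent (nhdsWithin 1 (Iio (1 : ℝ)))
          (iteratedDeriv p (fun z => S (1 / (1 - z))))
          (fun z => C * (1 / (1 - z)) ^ (p + 1) * deriv S (1 / (1 - z)))) ∧
      (IsEquivalent (nhdsWithin 1 (Iio (1 : ℝ)))
          (fun z => C * (1 / (1 - z)) ^ (p + 1) * deriv S (1 / (1 - z)))
          (fun z => -α * C * (1 / (1 - z)) ^ (p : ℕ) * S (1 / (1 - z)))) := by
  -- basic facts about α and Gamma values
  have hαnotint : ∀ d : ℤ, (d : ℝ) ≠ α := by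
    intro d h
    have h1 : (1:ℝ) < (d:ℝ) := h ▸ hα1
    have h2 : (d:ℝ) < 2 := h ▸ hα2
    have h1' : (1:ℤ) < d := by exact_mod_cast h1
    have h2' : d < 2 := by exact_mod_cast h2
    omega
  set c : ℕ → ℝ := fun k => Real.Gamma (1 - α) / Real.Gamma (1 - α - k) with hcdef
  have hΓden : ∀ k : ℕ, Real.Gamma (1 - α - k) ≠ 0 := by
    intro k
    apply Real.Gamma_ne_zero
    intro m hm
    apply hαnotint (1 - (k:ℤ) + m)
    push_cast
    linarith
  have hΓnum : Real.Gamma (1 - α) ≠ 0 := by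
    have := hΓden 0
    simpa using this
  have hcne : ∀ k, c k ≠ 0 := fun k => div_ne_zero hΓnum (hΓden k)
  have hcsucc : ∀ k : ℕ, c (k+1) = -(α + k) * c k := by
    intro k
    have hx : (-α - (k:ℝ)) ≠ 0 := by
      have : (0:ℝ) ≤ (k:ℝ) := Nat.cast_nonneg k
      intro h; linarith
    have h3 : Real.Gamma (1 - α - (k:ℝ)) = (-α - (k:ℝ)) * Real.Gamma (-α - (k:ℝ)) := by
      rw [show (1 - α - (k:ℝ)) = (-α - (k:ℝ)) + 1 by ring, Real.Gamma_add_one hx]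
    have h4 : Real.Gamma (-α - (k:ℝ)) ≠ 0 := by
      have := hΓden (k+1)
      rw [show (1 - α - ((k:ℕ)+1:ℕ)) = -α - (k:ℝ) by push_cast; ring] at this
      exact this
    simp only [hcdef]
    rw [show ((k:ℕ)+1:ℕ) = k + 1 from rfl]
    push_cast
    rw [show (1 - α - ((k:ℝ) + 1)) = -α - (k:ℝ) by ring, h3]
    field_simp
    ring
  have hc1 : c 1 = -α := by
    have h0 : c 0 = 1 := by
      simp only [hcdef]
      norm_num
      exact hΓnum
    have := hcsucc 0
    rw [h0] at this
    simpa using this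
  -- positivity of S
  have hSpos : ∀ u : ℝ, 0 < u → 0 < S u := by
    intro u hu
    rw [hS u hu]
    exact mul_pos (hℓ.1 u hu) (Real.rpow_pos_of_pos hu _)
  intro p hp
  -- eventual nonvanishing of iterated derivatives, hence differentiability
  have hev1 : ∀ k ∈ Finset.Icc 1 p, ∀ᶠ u in atTop, deriv^[k] S u ≠ 0 := by
    intro k _
    have h := (hratio k).eventually_ne (hcne k)
    filter_upwards [h] with u hu h0
    apply hu
    rw [iteratedDeriv_eq_iterate, h0, mul_zero, zero_div]
  have hev : ∀ᶠ u in atTop, ∀ k ∈ Finset.Icc 1 p, deriv^[k] S u ≠ 0 :=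
    (Filter.eventually_all_finset _).2 hev1
  obtain ⟨M₀, hM₀⟩ := Filter.eventually_atTop.1 hev
  set M : ℝ := max M₀ 1 with hMdef
  have hM1 : (1:ℝ) ≤ M := le_max_right _ _
  have hMpos : (0:ℝ) < M := lt_of_lt_of_le one_pos hM1
  have hMprop : ∀ u, M ≤ u → ∀ k, 1 ≤ k → k ≤ p → deriv^[k] S u ≠ 0 := by
    intro u hu k h1 h2
    exact hM₀ u (le_trans (le_max_left _ _) hu) k (Finset.mem_Icc.2 ⟨h1, h2⟩)
  have hdiff : ∀ u, M < u → ∀ k, k + 1 ≤ p → DifferentiableAt ℝ (deriv^[k] S) u := by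
    intro u hu k hk
    apply differentiableAt_of_deriv_ne_zero
    have := hMprop u hu.le (k+1) (by omega) hk
    rwa [Function.iterate_succ_apply'] at this
  set z₀ : ℝ := 1 - 1/M with hz₀def
  have hz₀lt : z₀ < 1 := by
    have : 0 < 1/M := by positivity
    simp only [hz₀def]; linarith
  have hWgt : ∀ z ∈ Set.Ioo z₀ 1, M < 1/(1-z) := by
    intro z hz
    have h1 : 0 < 1 - z := by linarith [hz.2]
    have h2 : 1 - z < 1/M := by
      have := hz.1; simp only [hz₀def] at this; linarith
    rw [lt_div_iff₀ h1]
    calc M * (1-z) < M * (1/M) := by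
          exact mul_lt_mul_of_pos_left h2 hMpos
      _ = 1 := by field_simp
  have hWpos : ∀ z ∈ Set.Ioo z₀ 1, 0 < 1/(1-z) := fun z hz => lt_trans hMpos (hWgt z hz)
  -- derivative of z ↦ 1/(1-z)
  have hWderiv : ∀ z ∈ Set.Ioo z₀ 1, HasDerivAt (fun z : ℝ => 1/(1-z)) ((1/(1-z))^2) z := by
    intro z hz
    have hne : (1:ℝ) - z ≠ 0 := ne_of_gt (by linarith [hz.2])
    have h0 : HasDerivAt (fun z : ℝ => 1 - z) (-1) z := by
      simpa using (hasDerivAt_id z).const_sub 1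
    have h1 := h0.inv hne
    have heq : (fun z : ℝ => 1/(1-z)) = fun z : ℝ => (1-z)⁻¹ := by
      funext y; rw [one_div]
    rw [heq]
    refine h1.congr_deriv ?_
    rw [div_pow, one_pow, one_div]
    field_simp
  -- the key induction: explicit formula for the j-th derivative
  have key : ∀ j : ℕ, 1 ≤ j → j ≤ p → ∃ a : ℕ → ℝ, a 0 = 0 ∧ (∀ k, j < k → a k = 0) ∧
      (∑ k ∈ Finset.Icc 1 j, a k * c k ≠ 0) ∧
      ∀ z ∈ Set.Ioo z₀ 1,
        deriv^[j] (fun z => S (1/(1-z))) z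
          = ∑ k ∈ Finset.Icc 1 j, a k * (deriv^[k] S (1/(1-z)) * (1/(1-z))^(j+k)) := by
    intro j
    induction j with
    | zero => omega
    | succ j ih =>
      intro _ hjp
      rcases Nat.eq_zero_or_pos j with rfl | hj1
      · -- base case j+1 = 1
        refine ⟨fun k => if k = 1 then 1 else 0, by norm_num,
          fun k hk => if_neg (by omega), ?_, ?_⟩
        · rw [Finset.Icc_self, Finset.sum_singleton]
          simpa using hcne 1
        · intro z hz
          have hs : DifferentiableAt ℝ S (1/(1-z)) := by
            have := hdiff (1/(1-z)) (hWgt z hz) 0 (by omega)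
            simpa using this
        
          have hcomp : HasDerivAt (fun z : ℝ => S (1/(1-z)))
              (deriv S (1/(1-z)) * (1/(1-z))^2) z :=
            (hs.hasDerivAt).comp z (hWderiv z hz)
          rw [Function.iterate_one, hcomp.deriv, Finset.Icc_self, Finset.sum_singleton]
          simp [Function.iterate_one]
      · -- inductive step
        obtain ⟨a, ha0, hatop, hKne, hform⟩ := ih hj1 (by omega)
        obtain ⟨a', ha'⟩ : ∃ a' : ℕ → ℝ, ∀ k, a' k = ((j:ℝ) + k) * a k + a (k-1) :=
          ⟨_, fun _ => rfl⟩
        refine ⟨a', ?_, ?_, ?_, ?_⟩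
        · rw [ha']; simp [ha0]
        · intro k hk
          rw [ha', hatop k (by omega), hatop (k-1) (by omega)]
          ring
        · simp only [ha']
          rw [sum_shift' j a c ha0 hatop]
          have : ∀ k ∈ Finset.Icc 1 j, a k * (c (k+1) + ((j:ℝ)+k) * c k)
              = ((j:ℝ) - α) * (a k * c k) := by
            intro k _
            rw [hcsucc k]
            ring
          rw [Finset.sum_congr rfl this, ← Finset.mul_sum]
          apply mul_ne_zero _ hKne
          rw [sub_ne_zero]
          intro h
          have h1 : (1:ℝ) < (j:ℝ) := h ▸ hα1
          have h2 : (j:ℝ) < 2 := h ▸ hα2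
          have h1' : 1 < j := by exact_mod_cast h1
          have h2' : j < 2 := by exact_mod_cast h2
          omega
        · intro z hz
          -- derivative of each summand
          have hterm : ∀ k ∈ Finset.Icc 1 j,
              HasDerivAt (fun z : ℝ => a k * (deriv^[k] S (1/(1-z)) * (1/(1-z))^(j+k)))
                (a k * ((deriv^[k+1] S (1/(1-z)) * (1/(1-z))^((j+1)+(k+1)))
                  + ((j:ℝ)+k) * (deriv^[k] S (1/(1-z)) * (1/(1-z))^((j+1)+k)))) z := by
            intro k hk
            obtain ⟨hk1, hk2⟩ := Finset.mem_Icc.1 hk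
            have hdk : DifferentiableAt ℝ (deriv^[k] S) (1/(1-z)) :=
              hdiff _ (hWgt z hz) k (by omega)
            have h1 : HasDerivAt (fun z : ℝ => deriv^[k] S (1/(1-z)))
                (deriv^[k+1] S (1/(1-z)) * (1/(1-z))^2) z := by
              have := (hdk.hasDerivAt).comp z (hWderiv z hz)
              rwa [← Function.iterate_succ_apply' deriv k S] at this
            have h2 : HasDerivAt (fun z : ℝ => (1/(1-z))^(j+k))
                (((j+k:ℕ):ℝ) * (1/(1-z))^(j+k-1) * (1/(1-z))^2) z :=
              (hWderiv z hz).pow (j+k)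
            have h3 := (h1.mul h2).const_mul (a k)
            refine h3.congr_deriv ?_
            obtain ⟨m, hm⟩ : ∃ m, j + k = m + 1 := ⟨j+k-1, by omega⟩
            have hm' : ((j:ℕ):ℝ) + ((k:ℕ):ℝ) = (m:ℝ) + 1 := by exact_mod_cast hm
            rw [hm', show (j+1)+(k+1) = m+3 by omega, show (j+1)+k = m+2 by omega,
              show j+k-1 = m by omega, hm]
            push_cast
            ring
          have hsum := HasDerivAt.fun_sum hterm
          have hev_eq : (deriv^[j] fun z => S (1/(1-z))) =ᶠ[nhds z]
              (fun z => ∑ k ∈ Finset.Icc 1 j,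
                a k * (deriv^[k] S (1/(1-z)) * (1/(1-z))^(j+k))) :=
            Filter.eventuallyEq_of_mem (isOpen_Ioo.mem_nhds hz) hform
          rw [Function.iterate_succ_apply', hev_eq.deriv_eq, hsum.deriv]
          simp only [ha']
          rw [sum_shift' j a (fun k => deriv^[k] S (1/(1-z)) * (1/(1-z))^((j+1)+k)) ha0 hatop]
  obtain ⟨a, ha0, hatop, hKne0, hform⟩ := key p hp le_rfl
  obtain ⟨K, hKdef⟩ : ∃ K : ℝ, K = ∑ k ∈ Finset.Icc 1 p, a k * c k := ⟨_, rfl⟩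
  have hKne : K ≠ 0 := by rw [hKdef]; exact hKne0
  -- tendsto of 1/(1-z) to infinity
  have hWtop : Tendsto (fun z : ℝ => 1/(1-z)) (nhdsWithin 1 (Iio (1:ℝ))) atTop := by
    have h1 : Tendsto (fun z : ℝ => 1 - z) (nhdsWithin 1 (Iio (1:ℝ)))
        (nhdsWithin 0 (Ioi (0:ℝ))) := by
      rw [tendsto_nhdsWithin_iff]
      constructor
      · have h1 : Tendsto (fun z : ℝ => z) (nhds (1:ℝ)) (nhds 1) := tendsto_id
        have h2 : Tendsto (fun _ : ℝ => (1:ℝ)) (nhds (1:ℝ)) (nhds 1) := tendsto_const_nhds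
        have h : Tendsto (fun z : ℝ => 1 - z) (nhds 1) (nhds 0) := by
          simpa using h2.sub h1
        exact h.mono_left nhdsWithin_le_nhds
      · filter_upwards [eventually_mem_nhdsWithin] with z hz
        simp only [Set.mem_Iio] at hz
        simp only [Set.mem_Ioi]
        linarith
    have := tendsto_inv_nhdsGT_zero.comp h1
    simpa [one_div, Function.comp_def] using this
  have hratio' : ∀ k : ℕ, Tendsto
      (fun z : ℝ => (1/(1-z))^k * deriv^[k] S (1/(1-z)) / S (1/(1-z)))
      (nhdsWithin 1 (Iio (1:ℝ))) (nhds (c k)) := by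
    intro k
    have h := (hratio k).comp hWtop
    simp only [Function.comp_def, iteratedDeriv_eq_iterate] at h
    exact h
  have hev_good : ∀ᶠ z in nhdsWithin 1 (Iio (1:ℝ)), z ∈ Set.Ioo z₀ 1 :=
    Ioo_mem_nhdsLT_of_mem ⟨hz₀lt, le_refl 1⟩
  -- limit of the main ratio
  have hulim : Tendsto (fun z : ℝ =>
      deriv^[p] (fun z => S (1/(1-z))) z / ((1/(1-z))^p * S (1/(1-z))))
      (nhdsWithin 1 (Iio (1:ℝ))) (nhds K) := by
    have h1 : Tendsto (fun z : ℝ => ∑ k ∈ Finset.Icc 1 p,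
        a k * ((1/(1-z))^k * deriv^[k] S (1/(1-z)) / S (1/(1-z))))
        (nhdsWithin 1 (Iio (1:ℝ))) (nhds K) := by
      rw [hKdef]
      exact tendsto_finset_sum _ (fun k _ => (hratio' k).const_mul (a k))
    apply h1.congr'
    filter_upwards [hev_good] with z hz
    have hw0 : (0:ℝ) < 1/(1-z) := hWpos z hz
    have hz1 : (1:ℝ) - z ≠ 0 := ne_of_gt (by linarith [hz.2])
    have hwne : (1/(1-z)) ≠ 0 := ne_of_gt hw0
    have hS0 : S (1/(1-z)) ≠ 0 := ne_of_gt (hSpos _ hw0)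
    rw [hform z hz, Finset.sum_div]
    apply Finset.sum_congr rfl
    intro k _
    rw [pow_add]
    field_simp
  obtain ⟨C, hCdef⟩ : ∃ C : ℝ, C = K / (-α) := ⟨_, rfl⟩
  have hα0 : α ≠ 0 := by linarith
  have hC0 : C ≠ 0 := by
    rw [hCdef]
    exact div_ne_zero hKne (by simpa using hα0)
  have hCK : -α * C = K := by
    rw [hCdef]; field_simp
  -- limit of v / w'
  have hvlim : Tendsto (fun z : ℝ =>
      (C * (1/(1-z))^(p+1) * deriv S (1/(1-z))) / ((1/(1-z))^p * S (1/(1-z))))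
      (nhdsWithin 1 (Iio (1:ℝ))) (nhds K) := by
    have h1 := (hratio' 1).const_mul C
    rw [hc1, show C * (-α) = K by rw [← hCK]; ring] at h1
    apply h1.congr'
    filter_upwards [hev_good] with z hz
    have hw0 : (0:ℝ) < 1/(1-z) := hWpos z hz
    have hwne : (1/(1-z)) ≠ 0 := ne_of_gt hw0
    have hz1 : (1:ℝ) - z ≠ 0 := ne_of_gt (by linarith [hz.2])
    have hS0 : S (1/(1-z)) ≠ 0 := ne_of_gt (hSpos _ hw0)
    rw [Function.iterate_one, pow_one, pow_succ]
    field_simp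
  -- limit of w / w'
  have hwlim : Tendsto (fun z : ℝ =>
      (-α * C * (1/(1-z))^(p:ℕ) * S (1/(1-z))) / ((1/(1-z))^p * S (1/(1-z))))
      (nhdsWithin 1 (Iio (1:ℝ))) (nhds K) := by
    refine Filter.Tendsto.congr' ?_ (tendsto_const_nhds (x := K))
    filter_upwards [hev_good] with z hz
    have hw0 : (0:ℝ) < 1/(1-z) := hWpos z hz
    have hz1 : (1:ℝ) - z ≠ 0 := ne_of_gt (by linarith [hz.2])
    have hwne : (1/(1-z)) ≠ 0 := ne_of_gt hw0
    have hS0 : S (1/(1-z)) ≠ 0 := ne_of_gt (hSpos _ hw0)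
    rw [← hCK]
    field_simp
  -- eventual nonvanishing
  have hw'ne : ∀ᶠ z in nhdsWithin 1 (Iio (1:ℝ)), (1/(1-z))^p * S (1/(1-z)) ≠ 0 := by
    filter_upwards [hev_good] with z hz
    have hw0 : (0:ℝ) < 1/(1-z) := hWpos z hz
    exact ne_of_gt (mul_pos (pow_pos hw0 p) (hSpos _ hw0))
  have hvne : ∀ᶠ z in nhdsWithin 1 (Iio (1:ℝ)),
      C * (1/(1-z))^(p+1) * deriv S (1/(1-z)) ≠ 0 := by
    filter_upwards [hev_good] with z hz
    have hw0 : (0:ℝ) < 1/(1-z) := hWpos z hz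
    have hd : deriv S (1/(1-z)) ≠ 0 := by
      have := hMprop (1/(1-z)) (hWgt z hz).le 1 le_rfl hp
      rwa [Function.iterate_one] at this
    exact mul_ne_zero (mul_ne_zero hC0 (ne_of_gt (pow_pos hw0 _))) hd
  have hwne : ∀ᶠ z in nhdsWithin 1 (Iio (1:ℝ)),
      -α * C * (1/(1-z))^(p:ℕ) * S (1/(1-z)) ≠ 0 := by
    filter_upwards [hev_good] with z hz
    have hw0 : (0:ℝ) < 1/(1-z) := hWpos z hz
    exact mul_ne_zero (mul_ne_zero (mul_ne_zero (by simpa using hα0) hC0)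
      (ne_of_gt (pow_pos hw0 _))) (ne_of_gt (hSpos _ hw0))
  have hdd : ∀ X Y w : ℝ, w ≠ 0 → X/w/(Y/w) = X/Y := by
    intro X Y w hw
    rcases eq_or_ne Y 0 with rfl | hY
    · simp
    · field_simp
  refine ⟨C, ?_, ?_⟩
  · rw [isEquivalent_iff_tendsto_one hvne]
    have h1 : Tendsto (fun z : ℝ =>
        (deriv^[p] (fun z => S (1/(1-z))) z / ((1/(1-z))^p * S (1/(1-z))))
          / ((C * (1/(1-z))^(p+1) * deriv S (1/(1-z))) / ((1/(1-z))^p * S (1/(1-z)))))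
        (nhdsWithin 1 (Iio (1:ℝ))) (nhds (K / K)) := hulim.div hvlim hKne
    rw [div_self hKne] at h1
    apply h1.congr'
    filter_upwards [hw'ne, hvne] with z h2 h3
    simp only [Pi.div_apply, iteratedDeriv_eq_iterate]
    exact hdd _ _ _ h2
  · rw [isEquivalent_iff_tendsto_one hwne]
    have h1 : Tendsto (fun z : ℝ =>
        ((C * (1/(1-z))^(p+1) * deriv S (1/(1-z))) / ((1/(1-z))^p * S (1/(1-z))))
          / ((-α * C * (1/(1-z))^(p:ℕ) * S (1/(1-z))) / ((1/(1-z))^p * S (1/(1-z)))))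
        (nhdsWithin 1 (Iio (1:ℝ))) (nhds (K / K)) := hvlim.div hwlim hKne
    rw [div_self hKne] at h1
    apply h1.congr'
    filter_upwards [hw'ne, hwne] with z h2 h3
    simp only [Pi.div_apply]
    exact hdd _ _ _ h2
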